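/- arXiv:2302.11477 — 3 statements merged into one kernel-verified Lean document; each statement's English description precedes it below -/
import Mathlib

section
/- Let L be an n×n symmetric positive definite matrix. Then the function f : 2^{Fin n} → ℝ defined by f(C) = log det(L_C) (with f(∅) = 0) is submodular: for all subsets A ⊆ B ⊆ Fin n and any element i ∉ B, f(A ∪ {i}) − f(A) ≥ f(B ∪ {i}) − f(B). -/
/-- Principal minor of `L` indexed by `C`, with value `1` when `C = ∅`. -/
def pminor {n : ℕ} (L : Matrix (Fin n) (Fin n) ℝ) (C : Finset (Fin n)) : ℝ :=
  (L.submatrix (fun i : C => (i : Fin n)) (fun j : C => (j : Fin n))).det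

namespace LogDetAux

open Matrix Finset

variable {n : ℕ} {m : Type*} [Fintype m]

/-- Extension of a vector along `g` by zero. -/
noncomputable def ext0 (g : m → Fin n) (x : m → ℝ) : Fin n → ℝ :=
  fun j => ∑ a, if j = g a then x a else 0

lemma ext0_apply_g {g : m → Fin n} (hg : Function.Injective g) (x : m → ℝ) (a : m) :
    ext0 g x (g a) = x a := by
  unfold ext0
  rw [Finset.sum_eq_single a]
  · simp
  · intro b _ hb
    rw [if_neg (fun h => hb (hg h.symm))]
  · simp

lemma ext0_apply_notmem {g : m → Fin n} (x : m → ℝ) {j : Fin n} (h : ∀ a, g a ≠ j) :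
    ext0 g x j = 0 := by
  unfold ext0
  refine Finset.sum_eq_zero fun a _ => ?_
  rw [if_neg (fun hh => h a hh.symm)]

lemma dot_ext0 (g : m → Fin n) (x : m → ℝ) (w : Fin n → ℝ) :
    ext0 g x ⬝ᵥ w = ∑ a, x a * w (g a) := by
  unfold ext0 dotProduct
  simp only [Finset.sum_mul, ite_mul, zero_mul]
  rw [Finset.sum_comm]
  refine Finset.sum_congr rfl fun a _ => ?_
  simp

lemma qf_ext0 (L : Matrix (Fin n) (Fin n) ℝ) (g : m → Fin n) (x : m → ℝ) :
    ext0 g x ⬝ᵥ L *ᵥ ext0 g x = x ⬝ᵥ (L.submatrix g g) *ᵥ x := by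
  rw [dot_ext0]
  unfold dotProduct
  refine Finset.sum_congr rfl fun a _ => ?_
  congr 1
  show (L *ᵥ ext0 g x) (g a) = _
  rw [mulVec, show (fun k => L (g a) k) ⬝ᵥ ext0 g x = ext0 g x ⬝ᵥ (fun k => L (g a) k) from
    (dotProduct_comm _ _), dot_ext0]
  simp [mulVec, dotProduct, submatrix, mul_comm]


lemma ext0_of_support {g : m → Fin n} (hg : Function.Injective g) (v : Fin n → ℝ)
    (hv : ∀ j, (∀ a, g a ≠ j) → v j = 0) : ext0 g (v ∘ g) = v := by
  funext j
  by_cases h : ∃ a, g a = j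
  · obtain ⟨a, rfl⟩ := h
    exact ext0_apply_g hg _ a
  · push_neg at h
    rw [ext0_apply_notmem _ h, hv j h]

lemma posDef_submatrix [DecidableEq m] {g : m → Fin n} (hg : Function.Injective g)
    {L : Matrix (Fin n) (Fin n) ℝ} (hL : L.PosDef) : (L.submatrix g g).PosDef := by
  rw [posDef_iff_dotProduct_mulVec]
  constructor
  · rw [Matrix.IsHermitian, conjTranspose_submatrix, hL.1]
  · intro x hx
    have hne : ext0 g x ≠ 0 := by
      obtain ⟨a, ha⟩ := Function.ne_iff.mp hx
      intro h0
      apply ha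
      have := congrFun h0 (g a)
      rwa [ext0_apply_g hg] at this
    have := hL.dotProduct_mulVec_pos hne
    simpa [qf_ext0] using this

lemma sq_expand {A : Matrix m m ℝ} (hA : A.PosDef) [DecidableEq m] (c : m → ℝ) (x : m → ℝ) :
    (x + A⁻¹ *ᵥ c) ⬝ᵥ A *ᵥ (x + A⁻¹ *ᵥ c)
      = x ⬝ᵥ A *ᵥ x + x ⬝ᵥ c + c ⬝ᵥ x + c ⬝ᵥ A⁻¹ *ᵥ c := by
  have hdet : IsUnit A.det := isUnit_iff_ne_zero.mpr hA.det_pos.ne'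
  have hAe : A *ᵥ (A⁻¹ *ᵥ c) = c := by
    rw [Matrix.mulVec_mulVec, Matrix.mul_nonsing_inv _ hdet, Matrix.one_mulVec]
  have hT : Aᵀ = A := by
    have := hA.1
    rwa [Matrix.IsHermitian, conjTranspose_eq_transpose_of_trivial] at this
  have hsy : ∀ y z : m → ℝ, y ⬝ᵥ A *ᵥ z = (A *ᵥ y) ⬝ᵥ z := by
    intro y z
    rw [dotProduct_mulVec, ← Matrix.mulVec_transpose, hT]
  rw [add_dotProduct, Matrix.mulVec_add, dotProduct_add, dotProduct_add,
    hAe, hsy (A⁻¹ *ᵥ c) x, hAe, dotProduct_comm (A⁻¹ *ᵥ c) c]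
  ring

lemma sq_lower {A : Matrix m m ℝ} (hA : A.PosDef) [DecidableEq m] (c : m → ℝ) (d : ℝ)
    (x : m → ℝ) :
    d - c ⬝ᵥ A⁻¹ *ᵥ c ≤ x ⬝ᵥ A *ᵥ x + x ⬝ᵥ c + c ⬝ᵥ x + d := by
  have h := hA.posSemidef.dotProduct_mulVec_nonneg (x + A⁻¹ *ᵥ c)
  rw [show star (x + A⁻¹ *ᵥ c) = x + A⁻¹ *ᵥ c from rfl] at h
  rw [sq_expand hA] at h
  linarith

lemma sq_eq {A : Matrix m m ℝ} (hA : A.PosDef) [DecidableEq m] (c : m → ℝ) (d : ℝ) :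
    (-(A⁻¹ *ᵥ c)) ⬝ᵥ A *ᵥ (-(A⁻¹ *ᵥ c)) + (-(A⁻¹ *ᵥ c)) ⬝ᵥ c + c ⬝ᵥ (-(A⁻¹ *ᵥ c)) + d
      = d - c ⬝ᵥ A⁻¹ *ᵥ c := by
  have h := sq_expand hA c (-(A⁻¹ *ᵥ c))
  simp only [neg_add_cancel] at h
  rw [show (0 : m → ℝ) ⬝ᵥ A *ᵥ 0 = 0 by simp] at h
  linarith [h]


variable (L : Matrix (Fin n) (Fin n) ℝ)

def gmap (C : Finset (Fin n)) (i : Fin n) : (↥C ⊕ Unit) → Fin n :=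
  Sum.elim (fun a => ↑a) (fun _ => i)

lemma gmap_inj {C : Finset (Fin n)} {i : Fin n} (hiC : i ∉ C) :
    Function.Injective (gmap C i) := by
  rintro (a | a) (b | b) h <;>
    simp only [gmap, Sum.elim_inl, Sum.elim_inr] at h
  · exact congrArg Sum.inl (Subtype.ext h)
  · exact absurd (h ▸ a.2) hiC
  · exact absurd (h.symm ▸ b.2) hiC
  · exact congrArg Sum.inr (Subsingleton.elim a b)

noncomputable def subm (C : Finset (Fin n)) : Matrix C C ℝ :=
  L.submatrix (fun a : C => ↑a) (fun a : C => ↑a)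

noncomputable def cvec (C : Finset (Fin n)) (i : Fin n) : ↥C → ℝ := fun a => L ↑a i

noncomputable def sval (C : Finset (Fin n)) (i : Fin n) : ℝ :=
  L i i - cvec L C i ⬝ᵥ (subm L C)⁻¹ *ᵥ cvec L C i

lemma pminor_eq_det_subm (C : Finset (Fin n)) : pminor L C = (subm L C).det := rfl

lemma pminor_pos (hL : L.PosDef) (C : Finset (Fin n)) : 0 < pminor L C :=
  (posDef_submatrix Subtype.coe_injective hL).det_pos

noncomputable def emap (C : Finset (Fin n)) (i : Fin n) (hiC : i ∉ C) :
    (↥C ⊕ Unit) ≃ ↥(insert i C) :=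
  Equiv.ofBijective
    (fun a => ⟨gmap C i a, by
      rcases a with a | a
      · exact Finset.mem_insert_of_mem a.2
      · exact Finset.mem_insert_self i C⟩)
    ⟨fun a b h => gmap_inj hiC (congrArg Subtype.val h), by
      rintro ⟨j, hj⟩
      rcases Finset.mem_insert.mp hj with rfl | hjC
      · exact ⟨Sum.inr (), rfl⟩
      · exact ⟨Sum.inl ⟨j, hjC⟩, rfl⟩⟩

lemma submatrix_g_eq (C : Finset (Fin n)) (i : Fin n) :
    L.submatrix (gmap C i) (gmap C i)
      = Matrix.fromBlocks (subm L C)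
          (Matrix.of fun (a : C) (_ : Unit) => L ↑a i)
          (Matrix.of fun (_ : Unit) (a : C) => L i ↑a)
          (Matrix.of fun (_ _ : Unit) => L i i) := by
  ext (a | a) (b | b) <;> rfl

lemma pminor_insert_eq_det_g {C : Finset (Fin n)} {i : Fin n} (hiC : i ∉ C) :
    pminor L (insert i C) = (L.submatrix (gmap C i) (gmap C i)).det := by
  rw [pminor_eq_det_subm]
  have key : ∀ a : ↥(insert i C), gmap C i ((emap C i hiC).symm a) = ↑a := fun a => by
    conv_rhs => rw [← Equiv.apply_symm_apply (emap C i hiC) a]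
    rfl
  have hsub : subm L (insert i C)
      = (L.submatrix (gmap C i) (gmap C i)).submatrix
          (emap C i hiC).symm (emap C i hiC).symm := by
    ext a b
    simp only [subm, Matrix.submatrix_apply, key]
  rw [hsub, Matrix.det_submatrix_equiv_self]

lemma pminor_insert (hL : L.PosDef) {C : Finset (Fin n)} {i : Fin n} (hiC : i ∉ C) :
    pminor L (insert i C) = pminor L C * sval L C i := by
  have hsym : ∀ j k, L j k = L k j := fun j k => by
    have := congrFun (congrFun hL.1 k) j
    simpa using this
  have hAC : (subm L C).PosDef := posDef_submatrix Subtype.coe_injective hL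
  have : Invertible (subm L C) :=
    (subm L C).invertibleOfIsUnitDet (isUnit_iff_ne_zero.mpr hAC.det_pos.ne')
  rw [pminor_insert_eq_det_g L hiC, submatrix_g_eq, Matrix.det_fromBlocks₁₁,
    ← pminor_eq_det_subm]
  congr 1
  rw [Matrix.det_unique, invOf_eq_nonsing_inv]
  show _ - _ = sval L C i
  unfold sval cvec
  congr 1
  simp only [Matrix.mul_apply, Matrix.of_apply, dotProduct, Matrix.mulVec,
    Finset.sum_mul, Finset.mul_sum]
  rw [Finset.sum_comm]
  refine Finset.sum_congr rfl fun a _ => Finset.sum_congr rfl fun b _ => ?_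
  rw [hsym i ↑a]
  ring

lemma qf_block (hL : L.PosDef) (C : Finset (Fin n)) (i : Fin n) (x₀ : ↥C → ℝ) :
    (Sum.elim x₀ (fun _ : Unit => 1)) ⬝ᵥ
        (L.submatrix (gmap C i) (gmap C i)) *ᵥ (Sum.elim x₀ fun _ : Unit => 1)
      = x₀ ⬝ᵥ (subm L C) *ᵥ x₀ + x₀ ⬝ᵥ cvec L C i + cvec L C i ⬝ᵥ x₀ + L i i := by
  have hsym : ∀ j k, L j k = L k j := fun j k => by
    have := congrFun (congrFun hL.1 k) j
    simpa using this
  rw [submatrix_g_eq, Matrix.fromBlocks_mulVec, sumElim_dotProduct_sumElim,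
    Sum.elim_comp_inl, Sum.elim_comp_inr, dotProduct_add, dotProduct_add]
  have h1 : (Matrix.of fun (a : C) (_ : Unit) => L ↑a i) *ᵥ (fun _ : Unit => (1:ℝ))
      = cvec L C i := by
    funext a; simp [Matrix.mulVec, dotProduct, cvec]
  have h2 : (fun _ : Unit => (1:ℝ)) ⬝ᵥ ((Matrix.of fun (_ : Unit) (a : C) => L i ↑a) *ᵥ x₀)
      = cvec L C i ⬝ᵥ x₀ := by
    simp only [dotProduct, Matrix.mulVec, Matrix.of_apply, cvec]
    rw [Fintype.sum_unique]
    simp only [one_mul]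
    exact Finset.sum_congr rfl fun a _ => by rw [hsym i a]
  have h3 : (fun _ : Unit => (1:ℝ)) ⬝ᵥ ((Matrix.of fun (_ _ : Unit) => L i i) *ᵥ
      (fun _ : Unit => (1:ℝ))) = L i i := by
    simp [dotProduct, Matrix.mulVec]
  rw [h1, h2, h3]
  ring

lemma exists_opt (hL : L.PosDef) {C : Finset (Fin n)} {i : Fin n} (hiC : i ∉ C) :
    ∃ v : Fin n → ℝ, v i = 1 ∧ (∀ j, j ∉ insert i C → v j = 0) ∧
      v ⬝ᵥ L *ᵥ v = sval L C i := by
  have hAC : (subm L C).PosDef := posDef_submatrix Subtype.coe_injective hL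
  refine ⟨ext0 (gmap C i)
      (Sum.elim (-((subm L C)⁻¹ *ᵥ cvec L C i)) fun _ : Unit => 1), ?_, ?_, ?_⟩
  · exact ext0_apply_g (gmap_inj hiC) _ (Sum.inr ())
  · intro j hj
    apply ext0_apply_notmem
    rintro (a | a) h
    · exact hj (h ▸ Finset.mem_insert_of_mem a.2)
    · exact hj ((h : i = j) ▸ Finset.mem_insert_self i C)
  · rw [qf_ext0, qf_block L hL C i]
    exact sq_eq hAC _ _

lemma qf_lower_global (hL : L.PosDef) {C : Finset (Fin n)} {i : Fin n} (hiC : i ∉ C)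
    (v : Fin n → ℝ) (hv1 : v i = 1) (hv0 : ∀ j, j ∉ insert i C → v j = 0) :
    sval L C i ≤ v ⬝ᵥ L *ᵥ v := by
  have hAC : (subm L C).PosDef := posDef_submatrix Subtype.coe_injective hL
  have hsupp : ∀ j, (∀ a, gmap C i a ≠ j) → v j = 0 := by
    intro j h
    refine hv0 j fun hm => ?_
    rcases Finset.mem_insert.mp hm with rfl | hjC
    · exact h (Sum.inr ()) rfl
    · exact h (Sum.inl ⟨j, hjC⟩) rfl
  have hv : ext0 (gmap C i) (v ∘ gmap C i) = v := ext0_of_support (gmap_inj hiC) v hsupp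
  have hcomp : v ∘ gmap C i = Sum.elim (fun a : C => v ↑a) (fun _ : Unit => 1) := by
    funext a
    rcases a with a | a
    · rfl
    · exact hv1
  calc sval L C i = L i i - cvec L C i ⬝ᵥ (subm L C)⁻¹ *ᵥ cvec L C i := rfl
    _ ≤ (fun a : C => v ↑a) ⬝ᵥ (subm L C) *ᵥ (fun a : C => v ↑a)
        + (fun a : C => v ↑a) ⬝ᵥ cvec L C i + cvec L C i ⬝ᵥ (fun a : C => v ↑a) + L i i :=
      sq_lower hAC _ _ _
    _ = v ⬝ᵥ L *ᵥ v := by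
      rw [← qf_block L hL C i, ← hcomp, ← qf_ext0, hv]

end LogDetAux


/-- `C ↦ log det (L_C)` is submodular for a symmetric positive definite `L`. -/
theorem logdet_pminor_submodular {n : ℕ} (L : Matrix (Fin n) (Fin n) ℝ)
    (hL : L.PosDef) (A B : Finset (Fin n)) (hAB : A ⊆ B) (i : Fin n) (hi : i ∉ B) :
    Real.log (pminor L (insert i B)) - Real.log (pminor L B)
      ≤ Real.log (pminor L (insert i A)) - Real.log (pminor L A) := by
  classical
  have hiA : i ∉ A := fun h => hi (hAB h)
  have hfB := LogDetAux.pminor_insert L hL hi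
  have hfA := LogDetAux.pminor_insert L hL hiA
  have hpB := LogDetAux.pminor_pos L hL B
  have hpA := LogDetAux.pminor_pos L hL A
  have hpiB := LogDetAux.pminor_pos L hL (insert i B)
  have hpiA := LogDetAux.pminor_pos L hL (insert i A)
  have hsB : 0 < LogDetAux.sval L B i := by
    rw [hfB] at hpiB
    by_contra h
    push_neg at h
    nlinarith
  have hsA : 0 < LogDetAux.sval L A i := by
    rw [hfA] at hpiA
    by_contra h
    push_neg at h
    nlinarith
  have hmono : LogDetAux.sval L B i ≤ LogDetAux.sval L A i := by
    obtain ⟨v, hv1, hv0, hvq⟩ := LogDetAux.exists_opt L hL hiA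
    rw [← hvq]
    exact LogDetAux.qf_lower_global L hL hi v hv1
      (fun j hj => hv0 j fun hm => hj (Finset.insert_subset_insert i hAB hm))
  rw [hfB, hfA, Real.log_mul hpB.ne' hsB.ne', Real.log_mul hpA.ne' hsA.ne']
  have := Real.log_le_log hsB hmono
  linarith
end

section
/- Let u : Fin m → ℝ be deterministic utilities and ε : Fin m → ℝ be i.i.d. standard Gumbel random variables (CDF F(t) = exp(−exp(−t))). Then for each alternative i, the probability that u(i) + ε(i) strictly exceeds u(j) + ε(j) for all j ≠ i equals exp(u(i)) / Σ_{j} exp(u(j)) (the softmax of the utilities). -/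
open MeasureTheory ProbabilityTheory Real Set Filter Topology

lemma two_mul_le_exp (x : ℝ) : 2 * x ≤ Real.exp x := by
  have h1 := Real.add_one_le_exp (x/2)
  have h2 : Real.exp (x/2) * Real.exp (x/2) = Real.exp x := by
    rw [← Real.exp_add]; ring_nf
  nlinarith [sq_nonneg (x/2 - 1), Real.exp_nonneg (x/2)]

lemma gumbel_hasDerivAt (b t : ℝ) :
    HasDerivAt (fun t => Real.exp (-(b * Real.exp (-t)))) (Real.exp (-(b * Real.exp (-t))) * (b * Real.exp (-t))) t := by
  have h1 : HasDerivAt (fun t : ℝ => -t) (-1) t := (hasDerivAt_id t).neg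
  have h2 : HasDerivAt (fun t : ℝ => Real.exp (-t)) (Real.exp (-t) * (-1)) t :=
    (Real.hasDerivAt_exp (-t)).comp t h1
  have h3 : HasDerivAt (fun t : ℝ => -(b * Real.exp (-t))) (-(b * (Real.exp (-t) * (-1)))) t :=
    ((h2.const_mul b)).neg
  have h4 := (Real.hasDerivAt_exp (-(b * Real.exp (-t)))).comp t h3
  refine h4.congr_deriv ?_
  ring

lemma gumbel_integrand_eq (b t : ℝ) :
    Real.exp (-(b * Real.exp (-t))) * Real.exp (-t) = Real.exp (-t - b * Real.exp (-t)) := by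
  rw [← Real.exp_add]; ring_nf

lemma gumbel_integrable {b : ℝ} (hb : 1 ≤ b) :
    Integrable (fun t => Real.exp (-t - b * Real.exp (-t))) := by
  have hcont : Continuous (fun t : ℝ => Real.exp (-t - b * Real.exp (-t))) := by
    continuity
  rw [← integrableOn_univ, ← Set.Iic_union_Ioi (a := (0:ℝ))]
  refine IntegrableOn.union ?_ ?_
  · refine (integrableOn_exp_Iic 0).mono' hcont.aestronglyMeasurable ?_
    refine Filter.Eventually.of_forall fun t => ?_
    rw [Real.norm_eq_abs, abs_of_nonneg (Real.exp_nonneg _)]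
    apply Real.exp_le_exp.2
    have h1 : 2 * (-t) ≤ Real.exp (-t) := two_mul_le_exp (-t)
    have h2 : Real.exp (-t) ≤ b * Real.exp (-t) := by
      nlinarith [Real.exp_nonneg (-t)]
    linarith
  · refine ((exp_neg_integrableOn_Ioi 0 (one_pos)).mono' hcont.aestronglyMeasurable ?_)
    refine Filter.Eventually.of_forall fun t => ?_
    rw [Real.norm_eq_abs, abs_of_nonneg (Real.exp_nonneg _)]
    have : (-1 : ℝ) * t = -t := by ring
    rw [this]
    apply Real.exp_le_exp.2
    nlinarith [Real.exp_nonneg (-t), two_mul_le_exp (-t)]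


lemma exp_neg_tendsto_top : Tendsto (fun t : ℝ => Real.exp (-t)) atTop (𝓝 0) :=
  Real.tendsto_exp_atBot.comp tendsto_neg_atTop_atBot

lemma exp_neg_tendsto_bot : Tendsto (fun t : ℝ => Real.exp (-t)) atBot atTop :=
  Real.tendsto_exp_atTop.comp tendsto_neg_atBot_atTop

lemma gumbel_F_tendsto_top {b : ℝ} :
    Tendsto (fun t : ℝ => Real.exp (-(b * Real.exp (-t)))) atTop (𝓝 1) := by
  have h1 : Tendsto (fun t : ℝ => -(b * Real.exp (-t))) atTop (𝓝 0) := by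
    simpa using (exp_neg_tendsto_top.const_mul b).neg
  have h2 := (Real.continuous_exp.tendsto 0).comp h1
  rw [Real.exp_zero] at h2
  exact h2

lemma gumbel_F_tendsto_bot {b : ℝ} (hb : 0 < b) :
    Tendsto (fun t : ℝ => Real.exp (-(b * Real.exp (-t)))) atBot (𝓝 0) := by
  have h1 : Tendsto (fun t : ℝ => -(b * Real.exp (-t))) atBot atBot := by
    have := exp_neg_tendsto_bot.const_mul_atTop hb
    exact tendsto_neg_atTop_atBot.comp this
  exact Real.tendsto_exp_atBot.comp h1

lemma gumbel_integral {b : ℝ} (hb : 1 ≤ b) :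
    ∫ t, Real.exp (-t - b * Real.exp (-t)) = 1 / b := by
  have hb0 : (0:ℝ) < b := lt_of_lt_of_le one_pos hb
  have hderiv : ∀ t : ℝ, HasDerivAt (fun t => Real.exp (-(b * Real.exp (-t))) / b)
      (Real.exp (-t - b * Real.exp (-t))) t := by
    intro t
    have := (gumbel_hasDerivAt b t).div_const b
    refine this.congr_deriv ?_
    rw [← gumbel_integrand_eq b t]
    field_simp
  have hbot : Tendsto (fun t => Real.exp (-(b * Real.exp (-t))) / b) atBot (𝓝 0) := by
    simpa using (gumbel_F_tendsto_bot hb0).div_const b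
  have htop : Tendsto (fun t => Real.exp (-(b * Real.exp (-t))) / b) atTop (𝓝 (1/b)) := by
    simpa using gumbel_F_tendsto_top.div_const b
  have := integral_of_hasDerivAt_of_tendsto hderiv (gumbel_integrable hb) hbot htop
  rw [this]; ring


noncomputable def gumbelMeasure : Measure ℝ :=
  volume.withDensity (fun t => ENNReal.ofReal (Real.exp (-t - Real.exp (-t))))

lemma gumbel_lintegral {a : ℝ} (ha : 0 ≤ a) :
    ∫⁻ t, ENNReal.ofReal (Real.exp (-(a * Real.exp (-t)))) ∂gumbelMeasure
      = ENNReal.ofReal (1 / (1 + a)) := by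
  have hb : (1:ℝ) ≤ 1 + a := by linarith
  have hfm : Measurable (fun t : ℝ => ENNReal.ofReal (Real.exp (-t - Real.exp (-t)))) := by
    fun_prop
  have hgm : Measurable (fun t : ℝ => ENNReal.ofReal (Real.exp (-(a * Real.exp (-t))))) := by
    fun_prop
  rw [gumbelMeasure, lintegral_withDensity_eq_lintegral_mul _ hfm hgm]
  have heq : ∀ t : ℝ, ENNReal.ofReal (Real.exp (-t - Real.exp (-t))) *
      ENNReal.ofReal (Real.exp (-(a * Real.exp (-t))))
      = ENNReal.ofReal (Real.exp (-t - (1 + a) * Real.exp (-t))) := by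
    intro t
    rw [← ENNReal.ofReal_mul (Real.exp_nonneg (-t - Real.exp (-t)))]
    congr 1
    rw [← Real.exp_add]
    ring_nf
  simp only [Pi.mul_apply, heq]
  rw [← ofReal_integral_eq_lintegral_ofReal (gumbel_integrable hb)
    (Filter.Eventually.of_forall fun t => Real.exp_nonneg _)]
  rw [gumbel_integral hb]

lemma gumbel_cdf (t : ℝ) :
    gumbelMeasure (Iic t) = ENNReal.ofReal (Real.exp (-Real.exp (-t))) := by
  rw [gumbelMeasure, withDensity_apply _ measurableSet_Iic]
  simp_rw [show ∀ x:ℝ, (-x - Real.exp (-x)) = (-x - 1 * Real.exp (-x)) from fun x => by ring]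
  rw [← ofReal_integral_eq_lintegral_ofReal ((gumbel_integrable le_rfl).integrableOn)
    (Filter.Eventually.of_forall fun x => Real.exp_nonneg _)]
  congr 1
  have hderiv : ∀ x ∈ Iic t, HasDerivAt (fun s => Real.exp (-(1 * Real.exp (-s))))
      (Real.exp (-x - 1 * Real.exp (-x))) x := by
    intro x _
    have := gumbel_hasDerivAt 1 x
    refine this.congr_deriv ?_
    rw [← gumbel_integrand_eq 1 x]; ring
  have := integral_Iic_of_hasDerivAt_of_tendsto' hderiv
    (by simpa using (gumbel_integrable le_rfl).integrableOn)
    (gumbel_F_tendsto_bot one_pos)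
  rw [this, sub_zero]
  norm_num

instance : IsProbabilityMeasure gumbelMeasure := by
  constructor
  have := gumbel_lintegral (le_refl 0)
  simpa using this




lemma gumbel_Iio (c : ℝ) :
    gumbelMeasure (Iio c) = ENNReal.ofReal (Real.exp (-Real.exp (-c))) := by
  rw [← gumbel_cdf c]
  refine le_antisymm (measure_mono Iio_subset_Iic_self) ?_
  rw [← Iio_union_right (a := c)]
  refine le_trans (measure_union_le _ _) ?_
  have h0 : gumbelMeasure {c} = 0 :=
    (withDensity_absolutelyContinuous volume _) (Real.volume_singleton)
  rw [h0, add_zero]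


lemma pi_map_eval {ι : Type*} [Fintype ι] [DecidableEq ι] (κ : ι → Measure ℝ) [∀ j, IsProbabilityMeasure (κ j)]
    (c : ι) : (Measure.pi κ).map (fun a => a c) = κ c := by
  refine Measure.ext fun s hs => ?_
  rw [Measure.map_apply (measurable_pi_apply c) hs]
  have h1 : (fun a : ι → ℝ => a c) ⁻¹' s
      = Set.pi univ (Function.update (fun _ => (univ : Set ℝ)) c s) := by
    ext x
    simp only [Set.mem_preimage, Set.mem_univ_pi]
    constructor
    · intro h j
      rcases eq_or_ne j c with rfl | hj
      · simpa [Function.update_self] using h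
      · simp [Function.update_of_ne hj]
    · intro h
      simpa [Function.update_self] using h c
  rw [h1, Measure.pi_pi]
  rw [Finset.prod_eq_single c (fun j _ hj => by simp [Function.update_of_ne hj])
    (fun h => absurd (Finset.mem_univ c) h)]
  simp [Function.update_self]

/-- With i.i.d. standard Gumbel noise added to deterministic utilities, the
probability that alternative `i` strictly maximizes utility is the softmax. -/
theorem gumbel_argmax_softmax {m : ℕ} (hm : 1 ≤ m) (u : Fin m → ℝ)
    {Ω : Type*} [MeasurableSpace Ω] (μ : Measure Ω) [IsProbabilityMeasure μ]
    (ε : Fin m → Ω → ℝ) (hmeas : ∀ i, Measurable (ε i))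
    (hindep : iIndepFun ε μ)
    (hcdf : ∀ i t, μ {ω | ε i ω ≤ t} = ENNReal.ofReal (Real.exp (-Real.exp (-t))))
    (i : Fin m) :
    μ {ω | ∀ j, j ≠ i → u j + ε j ω < u i + ε i ω}
      = ENNReal.ofReal (Real.exp (u i) / ∑ j, Real.exp (u j)) := by
  classical
  -- each ε j has law gumbelMeasure
  have hmapj : ∀ j, μ.map (ε j) = gumbelMeasure := by
    intro j
    haveI : IsProbabilityMeasure (μ.map (ε j)) :=
      Measure.isProbabilityMeasure_map (hmeas j).aemeasurable
    refine Measure.ext_of_Iic (μ.map (ε j)) gumbelMeasure fun t => ?_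
    rw [Measure.map_apply (hmeas j) measurableSet_Iic, gumbel_cdf]
    exact hcdf j t
  set X : Ω → (Fin m → ℝ) := fun ω j => ε j ω with hXdef
  have hX : Measurable X := measurable_pi_lambda _ hmeas
  set S : Set (Fin m → ℝ) := {x | ∀ j, j ≠ i → u j + x j < u i + x i} with hSdef
  have hS : MeasurableSet S := by
    have hs : S = ⋂ j, {x : Fin m → ℝ | j ≠ i → u j + x j < u i + x i} := by
      ext x; simp [hSdef, Set.mem_iInter]
    rw [hs]
    refine MeasurableSet.iInter fun j => ?_
    by_cases hj : j = i
    · simp [hj]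
    · have h2 : {x : Fin m → ℝ | j ≠ i → u j + x j < u i + x i}
          = {x | u j + x j < u i + x i} := by ext x; simp [hj]
      rw [h2]
      exact measurableSet_lt (measurable_const.add (measurable_pi_apply j))
        (measurable_const.add (measurable_pi_apply i))
  -- the joint law is the product of Gumbel measures
  have hjoint : μ.map X = Measure.pi (fun _ : Fin m => gumbelMeasure) := by
    refine (Measure.pi_eq fun s hs => ?_).symm
    rw [Measure.map_apply hX (MeasurableSet.univ_pi hs)]
    have hpre : X ⁻¹' (Set.pi univ s) = ⋂ j ∈ Finset.univ, ε j ⁻¹' s j := by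
      ext ω; simp [hXdef, Set.mem_pi]
    rw [hpre, hindep.measure_inter_preimage_eq_mul Finset.univ (fun j _ => hs j)]
    refine Finset.prod_congr rfl fun j _ => ?_
    rw [← hmapj j, Measure.map_apply (hmeas j) (hs j)]
  have hevent : μ {ω | ∀ j, j ≠ i → u j + ε j ω < u i + ε i ω}
      = Measure.pi (fun _ : Fin m => gumbelMeasure) S := by
    rw [← hjoint, Measure.map_apply hX hS]; rfl
  rw [hevent]
  -- split off coordinate i
  set e := MeasurableEquiv.piEquivPiSubtypeProd (fun _ : Fin m => ℝ) (fun j => j = i) with he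
  have hMP := measurePreserving_piEquivPiSubtypeProd
    (fun _ : Fin m => gumbelMeasure) (fun j : Fin m => j = i)
  rw [← he] at hMP
  set A : ℝ := ∑ j : {x : Fin m // ¬ x = i}, Real.exp (u j.1 - u i) with hA
  have hAnn : 0 ≤ A := Finset.sum_nonneg fun j _ => (Real.exp_nonneg _)
  have hesymm : ∀ (x : ({j : Fin m // j = i} → ℝ) × ({j : Fin m // ¬ j = i} → ℝ)) (k : Fin m),
      e.symm x k = if h : k = i then x.1 ⟨k, h⟩ else x.2 ⟨k, h⟩ := fun x k => rfl
  have hpre2 : S = e ⁻¹' (e.symm ⁻¹' S) := by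
    ext x; simp
  rw [hpre2, ← Measure.map_apply e.measurable (e.symm.measurable hS), hMP.map_eq,
    Measure.prod_apply (e.symm.measurable hS)]
  have hslice : ∀ a : {x : Fin m // x = i} → ℝ,
      (Prod.mk a ⁻¹' (⇑e.symm ⁻¹' S))
        = Set.pi univ (fun j : {x : Fin m // ¬ x = i} => Iio (u i + a ⟨i, rfl⟩ - u j.1)) := by
    intro a
    ext b
    simp only [Set.mem_preimage, hSdef, Set.mem_setOf_eq, Set.mem_univ_pi, mem_Iio, hesymm]
    constructor
    · intro h j
      have := h j.1 j.2
      rw [dif_neg j.2, dif_pos trivial] at this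
      linarith
    · intro h j hj
      rw [dif_neg hj, dif_pos trivial]
      have := h ⟨j, hj⟩
      linarith
  have hprod : ∀ t : ℝ,
      (∏ j : {x : Fin m // ¬ x = i},
        ENNReal.ofReal (Real.exp (-Real.exp (-(u i + t - u j.1)))))
        = ENNReal.ofReal (Real.exp (-(A * Real.exp (-t)))) := by
    intro t
    rw [← ENNReal.ofReal_prod_of_nonneg (fun j _ => Real.exp_nonneg _)]
    congr 1
    rw [← Real.exp_sum]
    congr 1
    have h2 : ∀ j : {x : Fin m // ¬ x = i},
        -Real.exp (-(u i + t - u j.1)) = -(Real.exp (u j.1 - u i) * Real.exp (-t)) := by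
      intro j; rw [← Real.exp_add]; ring_nf
    rw [Finset.sum_congr rfl fun j _ => h2 j, hA, Finset.sum_mul, ← Finset.sum_neg_distrib]
  simp only [hslice, Measure.pi_pi, gumbel_Iio, hprod]
  -- integrate out coordinate i
  have hg : Measurable (fun t : ℝ => ENNReal.ofReal (Real.exp (-(A * Real.exp (-t))))) := by
    fun_prop
  rw [← lintegral_map (f := fun t : ℝ => ENNReal.ofReal (Real.exp (-(A * Real.exp (-t)))))
    (g := fun a : {x : Fin m // x = i} → ℝ => a ⟨i, rfl⟩) hg (measurable_pi_apply _),
    @pi_map_eval ({x : Fin m // x = i}) (Subtype.fintype _) _ (fun _ => gumbelMeasure) _ ⟨i, rfl⟩,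
    gumbel_lintegral hAnn]
  -- final arithmetic
  congr 1
  have h1 : A = ∑ j ∈ Finset.univ.erase i, Real.exp (u j - u i) := by
    rw [hA]; exact (Finset.sum_subtype (p := fun x => ¬ x = i) (Finset.univ.erase i) (fun x => by simp) (fun j => Real.exp (u j - u i))).symm
  have h2 : ∑ j, Real.exp (u j) = Real.exp (u i) + ∑ j ∈ Finset.univ.erase i, Real.exp (u j) :=
    (Finset.add_sum_erase _ _ (Finset.mem_univ i)).symm
  have hsum : ∑ j, Real.exp (u j) = Real.exp (u i) * (1 + A) := by
    rw [h1, h2, mul_add, mul_one, Finset.mul_sum]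
    congr 1
    exact Finset.sum_congr rfl fun j _ => by rw [← Real.exp_add]; ring_nf
  rw [hsum]
  have hpos : (0:ℝ) < 1 + A := by linarith
  have hexp : Real.exp (u i) ≠ 0 := Real.exp_ne_zero _
  field_simp
end

section
/- (Hadamard–Fischer-type inequality for PSD matrices under subset union) Let L be an n×n symmetric positive semidefinite matrix and let A, B ⊆ Fin n. Then det(L_{A∪B}) · det(L_{A∩B}) ≤ det(L_A) · det(L_B). -/
namespace PminorAux

open Matrix Finset Real

variable {n : ℕ} {L : Matrix (Fin n) (Fin n) ℝ} {S : Finset (Fin n)} {i j : Fin n}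

def mat (L : Matrix (Fin n) (Fin n) ℝ) (C : Finset (Fin n)) : Matrix C C ℝ :=
  L.submatrix (fun i : C => (i : Fin n)) (fun j : C => (j : Fin n))

lemma pminor_eq (L : Matrix (Fin n) (Fin n) ℝ) (C : Finset (Fin n)) :
    pminor L C = (mat L C).det := rfl

lemma sum_ext_zero (C : Finset (Fin n)) (f : Fin n → ℝ) (hf : ∀ a ∉ C, f a = 0) :
    ∑ a : Fin n, f a = ∑ a : C, f (a : Fin n) := by
  calc ∑ a : Fin n, f a = ∑ a ∈ C, f a :=
        (Finset.sum_subset (Finset.subset_univ C) (fun a _ ha => hf a ha)).symm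
    _ = ∑ a : C, f (a : Fin n) := (Finset.sum_coe_sort C f).symm

lemma mat_posDef (hL : L.PosDef) (C : Finset (Fin n)) : (mat L C).PosDef := by
  rw [posDef_iff_dotProduct_mulVec]
  constructor
  · exact hL.isHermitian.submatrix _
  · intro x hx
    classical
    set y : Fin n → ℝ := fun i => if h : i ∈ C then x ⟨i, h⟩ else 0 with hy
    have hyx : ∀ a : C, y a = x a := fun a => by simp [hy, a.2]
    have hy0 : y ≠ 0 := by
      intro h
      apply hx
      ext a
      have := congrFun h (a : Fin n)
      rwa [hyx] at this
    have key : (star x) ⬝ᵥ (mat L C).mulVec x = (star y) ⬝ᵥ L.mulVec y := by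
      simp only [dotProduct, mulVec, mat, submatrix_apply, star_trivial]
      rw [sum_ext_zero C (fun a => y a * ∑ j, L a j * y j) (fun a ha => by simp [hy, ha])]
      apply Finset.sum_congr rfl
      intro a _
      rw [hyx]
      congr 1
      rw [sum_ext_zero C (fun j => L a j * y j) (fun b hb => by simp [hy, hb])]
      exact Finset.sum_congr rfl fun b _ => by rw [hyx]
    rw [key]
    exact hL.dotProduct_mulVec_pos hy0

lemma pminor_pos (hL : L.PosDef) (C : Finset (Fin n)) : 0 < pminor L C := by
  rw [pminor_eq]
  exact (mat_posDef hL C).det_pos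

def rowM (L : Matrix (Fin n) (Fin n) ℝ) (S : Finset (Fin n)) (a : Fin n) :
    Matrix Unit {x // x ∈ S} ℝ := Matrix.of fun _ y => L a (y : Fin n)

def colM (L : Matrix (Fin n) (Fin n) ℝ) (S : Finset (Fin n)) (b : Fin n) :
    Matrix {x // x ∈ S} Unit ℝ := Matrix.of fun x _ => L (x : Fin n) b

noncomputable def schr (L : Matrix (Fin n) (Fin n) ℝ) (S : Finset (Fin n)) (a b : Fin n) : ℝ :=
  L a b - (rowM L S a * (mat L S)⁻¹ * colM L S b) () ()

def wTwo (i j : Fin n) : Unit ⊕ Unit → Fin n := Sum.elim (fun _ => j) (fun _ => i)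

noncomputable def eIns (hi : i ∉ S) : {x // x ∈ insert i S} ≃ ({x // x ∈ S} ⊕ Unit) :=
  (Finset.subtypeInsertEquivOption hi).trans (Equiv.optionEquivSumPUnit _)

def vIns (S : Finset (Fin n)) (i : Fin n) : ({x // x ∈ S} ⊕ Unit) → Fin n :=
  Sum.elim Subtype.val (fun _ => i)

lemma vIns_eIns (hi : i ∉ S) (a : {x // x ∈ insert i S}) : vIns S i (eIns hi a) = (a : Fin n) := by
  simp only [eIns, Equiv.trans_apply, Finset.subtypeInsertEquivOption]
  by_cases h : (a : Fin n) = i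
  · simp [h, vIns]
  · simp [h, vIns]

noncomputable def eIns2 (hi : i ∉ insert j S) (hj : j ∉ S) :
    {x // x ∈ insert i (insert j S)} ≃ ({x // x ∈ S} ⊕ (Unit ⊕ Unit)) :=
  (eIns hi).trans ((Equiv.sumCongr (eIns hj) (Equiv.refl Unit)).trans (Equiv.sumAssoc _ _ _))

def vIns2 (S : Finset (Fin n)) (i j : Fin n) : ({x // x ∈ S} ⊕ (Unit ⊕ Unit)) → Fin n :=
  Sum.elim Subtype.val (wTwo i j)

lemma vIns2_eIns2 (hi : i ∉ insert j S) (hj : j ∉ S) (a : {x // x ∈ insert i (insert j S)}) :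
    vIns2 S i j (eIns2 hi hj a) = (a : Fin n) := by
  have h1 : ∀ p : {x // x ∈ insert j S} ⊕ Unit,
      vIns2 S i j ((Equiv.sumAssoc _ _ _) ((Equiv.sumCongr (eIns hj) (Equiv.refl Unit)) p)) =
        vIns (insert j S) i p := by
    rintro (x | u)
    · have hx := vIns_eIns hj x
      rcases h : eIns hj x with s | u
      · rw [h] at hx
        simp only [Equiv.sumCongr_apply, Sum.map_inl, h, Equiv.sumAssoc_apply_inl_inl]
        simpa [vIns2, vIns, wTwo] using hx
      · rw [h] at hx
        simp only [Equiv.sumCongr_apply, Sum.map_inl, h, Equiv.sumAssoc_apply_inl_inr]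
        simpa [vIns2, vIns, wTwo] using hx
    · rfl
  rw [eIns2, Equiv.trans_apply, Equiv.trans_apply, h1, vIns_eIns]

lemma mat_insert_eq (L : Matrix (Fin n) (Fin n) ℝ) (hi : i ∉ S) :
    mat L (insert i S) =
      (fromBlocks (mat L S) (colM L S i) (rowM L S i)
        (Matrix.of fun _ _ => L i i)).submatrix (eIns hi) (eIns hi) := by
  ext a b
  have key : ∀ p q, (fromBlocks (mat L S) (colM L S i) (rowM L S i)
      (Matrix.of fun _ _ => L i i)) p q = L (vIns S i p) (vIns S i q) := by
    rintro (p | p) (q | q) <;> rfl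
  rw [submatrix_apply, key, vIns_eIns, vIns_eIns]
  rfl

lemma pminor_insert (L : Matrix (Fin n) (Fin n) ℝ) (hi : i ∉ S) [Invertible (mat L S)] :
    pminor L (insert i S) = pminor L S * schr L S i i := by
  rw [pminor_eq, pminor_eq, mat_insert_eq L hi, det_submatrix_equiv_self, det_fromBlocks₁₁]
  congr 1
  rw [det_unique]
  simp only [Matrix.sub_apply, invOf_eq_nonsing_inv]
  rfl

def e3 : (Fin 2) ≃ (Unit ⊕ Unit) where
  toFun := ![Sum.inl (), Sum.inr ()]
  invFun := Sum.elim (fun _ => 0) (fun _ => 1)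
  left_inv := by decide
  right_inv := by rintro (⟨⟩ | ⟨⟩) <;> rfl

lemma det_puu (N : Matrix (Unit ⊕ Unit) (Unit ⊕ Unit) ℝ) :
    N.det = N (.inl ()) (.inl ()) * N (.inr ()) (.inr ()) -
      N (.inl ()) (.inr ()) * N (.inr ()) (.inl ()) := by
  rw [← det_submatrix_equiv_self e3 N, det_fin_two]
  rfl

lemma mat_insert2_eq (L : Matrix (Fin n) (Fin n) ℝ) (hi : i ∉ insert j S) (hj : j ∉ S) :
    mat L (insert i (insert j S)) =
      (fromBlocks (mat L S) (Matrix.of fun x p => L (x : Fin n) (wTwo i j p))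
        (Matrix.of fun p x => L (wTwo i j p) (x : Fin n))
        (Matrix.of fun p q => L (wTwo i j p) (wTwo i j q))).submatrix
          (eIns2 hi hj) (eIns2 hi hj) := by
  ext a b
  have key : ∀ p q, (fromBlocks (mat L S) (Matrix.of fun x p => L (x : Fin n) (wTwo i j p))
      (Matrix.of fun p x => L (wTwo i j p) (x : Fin n))
      (Matrix.of fun p q => L (wTwo i j p) (wTwo i j q))) p q =
        L (vIns2 S i j p) (vIns2 S i j q) := by
    rintro (p | p | p) (q | q | q) <;> rfl
  rw [submatrix_apply, key, vIns2_eIns2, vIns2_eIns2]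
  rfl

lemma pminor_insert2 (L : Matrix (Fin n) (Fin n) ℝ) (hi : i ∉ insert j S) (hj : j ∉ S)
    [Invertible (mat L S)] :
    pminor L (insert i (insert j S)) =
      pminor L S * (schr L S j j * schr L S i i - schr L S j i * schr L S i j) := by
  rw [pminor_eq, pminor_eq, mat_insert2_eq L hi hj, det_submatrix_equiv_self, det_fromBlocks₁₁]
  congr 1
  have hN : ∀ p q, ((Matrix.of fun (p q : Unit ⊕ Unit) => L (wTwo i j p) (wTwo i j q)) -
      (Matrix.of fun (p : Unit ⊕ Unit) (x : {x // x ∈ S}) => L (wTwo i j p) (x : Fin n)) *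
        ⅟(mat L S) *
      (Matrix.of fun (x : {x // x ∈ S}) (p : Unit ⊕ Unit) => L (x : Fin n) (wTwo i j p))) p q =
        schr L S (wTwo i j p) (wTwo i j q) := by
    intro p q
    simp only [Matrix.sub_apply, invOf_eq_nonsing_inv, schr]
    rfl
  rw [det_puu, hN, hN, hN, hN]
  rfl

lemma schr_symm (hL : L.IsSymm) (a b : Fin n) : schr L S a b = schr L S b a := by
  have hA : (mat L S)ᵀ = mat L S := by
    ext x y
    exact hL.apply _ _
  have hAi : ((mat L S)⁻¹)ᵀ = (mat L S)⁻¹ := by rw [transpose_nonsing_inv, hA]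
  have h1 : ∀ c, (colM L S c)ᵀ = rowM L S c := by
    intro c; ext u x; exact hL.apply _ _
  have h2 : ∀ c, (rowM L S c)ᵀ = colM L S c := by
    intro c; ext x u; exact hL.apply _ _
  have key : rowM L S a * (mat L S)⁻¹ * colM L S b =
      (rowM L S b * (mat L S)⁻¹ * colM L S a)ᵀ := by
    rw [transpose_mul, transpose_mul, h1, h2, hAi, Matrix.mul_assoc]
  simp only [schr, key, transpose_apply]
  rw [hL.apply a b]

lemma pd_local (hL : L.PosDef) (hi : i ∉ insert j S) (hj : j ∉ S) :
    pminor L (insert i (insert j S)) * pminor L S ≤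
      pminor L (insert i S) * pminor L (insert j S) := by
  haveI := (mat_posDef hL S).isUnit.invertible
  have hsym : L.IsSymm := by
    have h := hL.isHermitian
    rwa [Matrix.IsHermitian, conjTranspose_eq_transpose_of_trivial] at h
  have hij : i ∉ S := fun h => hi (mem_insert_of_mem h)
  rw [pminor_insert2 L hi hj, pminor_insert L hij, pminor_insert L hj]
  have hs := schr_symm (S := S) hsym i j
  rw [← hs]
  nlinarith [sq_nonneg (pminor L S * schr L S i j)]

lemma logle {a b c d : ℝ} (ha : 0 < a) (hb : 0 < b) (hc : 0 < c) (hd : 0 < d)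
    (h : a * b ≤ c * d) : Real.log a + Real.log b ≤ Real.log c + Real.log d := by
  rw [← Real.log_mul ha.ne' hb.ne', ← Real.log_mul hc.ne' hd.ne']
  exact Real.log_le_log (by positivity) h

lemma pd_diminish (hL : L.PosDef) :
    ∀ (k : ℕ) (A S : Finset (Fin n)) (i : Fin n), (A \ S).card = k → S ⊆ A → i ∉ A →
      Real.log (pminor L (insert i A)) + Real.log (pminor L S) ≤
        Real.log (pminor L (insert i S)) + Real.log (pminor L A) := by
  intro k
  induction k with
  | zero =>
    intro A S i hcard hSA _
    have : A = S := (Finset.Subset.antisymm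
      (by rwa [← Finset.sdiff_eq_empty_iff_subset, ← Finset.card_eq_zero]) hSA)
    subst this
    linarith
  | succ k ih =>
    intro A S i hcard hSA hiA
    have hne : (A \ S).Nonempty := by
      rw [← Finset.card_pos, hcard]; omega
    obtain ⟨j, hj⟩ := hne
    rw [Finset.mem_sdiff] at hj
    set A' := A.erase j with hA'
    have hSA' : S ⊆ A' := fun x hx =>
      Finset.mem_erase.mpr ⟨fun h => hj.2 (h ▸ hx), hSA hx⟩
    have hAeq : A = insert j A' := (Finset.insert_erase hj.1).symm
    have hjA' : j ∉ A' := Finset.notMem_erase _ _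
    have hiA' : i ∉ insert j A' := by rw [← hAeq]; exact hiA
    have hcard' : (A' \ S).card = k := by
      have : A' \ S = (A \ S).erase j := by
        ext x; simp [hA', Finset.mem_erase, Finset.mem_sdiff]; tauto
      rw [this, Finset.card_erase_of_mem (Finset.mem_sdiff.mpr hj), hcard]
      omega
    have hlocal := pd_local hL hiA' hjA'
    rw [← hAeq] at hlocal
    have h1 : Real.log (pminor L (insert i A)) + Real.log (pminor L A') ≤
        Real.log (pminor L (insert i A')) + Real.log (pminor L A) :=
      logle (pminor_pos hL _) (pminor_pos hL _) (pminor_pos hL _) (pminor_pos hL _) hlocal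
    have h2 := ih A' S i hcard' hSA' (fun h => hiA' (Finset.mem_insert_of_mem h))
    linarith

lemma pd_submod (hL : L.PosDef) (A B : Finset (Fin n)) :
    pminor L (A ∪ B) * pminor L (A ∩ B) ≤ pminor L A * pminor L B := by
  suffices h : ∀ (k : ℕ) (A : Finset (Fin n)), (A \ B).card = k →
      Real.log (pminor L (A ∪ B)) + Real.log (pminor L (A ∩ B)) ≤
        Real.log (pminor L A) + Real.log (pminor L B) by
    have := h (A \ B).card A rfl
    rw [← Real.log_le_log_iff (mul_pos (pminor_pos hL (A ∪ B)) (pminor_pos hL (A ∩ B)))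
        (mul_pos (pminor_pos hL A) (pminor_pos hL B)),
      Real.log_mul (pminor_pos hL (A ∪ B)).ne' (pminor_pos hL (A ∩ B)).ne',
      Real.log_mul (pminor_pos hL A).ne' (pminor_pos hL B).ne']
    exact this
  intro k
  induction k with
  | zero =>
    intro A hcard
    have hAB : A ⊆ B := by
      rwa [← Finset.sdiff_eq_empty_iff_subset, ← Finset.card_eq_zero]
    rw [Finset.union_eq_right.mpr hAB, Finset.inter_eq_left.mpr hAB]
    linarith
  | succ k ih =>
    intro A hcard
    have hne : (A \ B).Nonempty := by rw [← Finset.card_pos, hcard]; omega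
    obtain ⟨i, hi⟩ := hne
    rw [Finset.mem_sdiff] at hi
    set A' := A.erase i with hA'
    have hAeq : A = insert i A' := (Finset.insert_erase hi.1).symm
    have hiA' : i ∉ A' := Finset.notMem_erase _ _
    have hiB : i ∉ A' ∪ B := by
      rw [Finset.mem_union]; rintro (h | h); exacts [hiA' h, hi.2 h]
    have hcard' : (A' \ B).card = k := by
      have : A' \ B = (A \ B).erase i := by
        ext x; simp [hA', Finset.mem_erase, Finset.mem_sdiff]; tauto
      rw [this, Finset.card_erase_of_mem (Finset.mem_sdiff.mpr hi), hcard]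
      omega
    have hdim := pd_diminish hL ((A' ∪ B) \ A').card (A' ∪ B) A' i rfl
      Finset.subset_union_left hiB
    have e1 : insert i (A' ∪ B) = A ∪ B := by rw [hAeq, Finset.insert_union]
    have e2 : insert i A' = A := hAeq.symm
    have e3 : A ∩ B = A' ∩ B := by
      ext x
      simp only [hA', Finset.mem_inter, Finset.mem_erase]
      constructor
      · rintro ⟨hxA, hxB⟩
        exact ⟨⟨fun h => hi.2 (h ▸ hxB), hxA⟩, hxB⟩
      · rintro ⟨⟨_, hxA⟩, hxB⟩
        exact ⟨hxA, hxB⟩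
    rw [e1, e2] at hdim
    have hih := ih A' hcard'
    rw [e3]
    linarith

end PminorAux

/-- Multiplicative submodularity of principal minors of a symmetric PSD matrix
(Hadamard–Fischer-type inequality). -/
theorem pminor_union_inter_le {n : ℕ} (L : Matrix (Fin n) (Fin n) ℝ)
    (hL : L.PosSemidef) (A B : Finset (Fin n)) :
    pminor L (A ∪ B) * pminor L (A ∩ B) ≤ pminor L A * pminor L B := by
  open PminorAux Matrix in
  have hPD : ∀ ε : ℝ, 0 < ε → (L + ε • 1).PosDef := fun ε hε =>
    Matrix.PosDef.posSemidef_add hL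
      (by rw [Matrix.smul_one_eq_diagonal]; exact .diagonal fun _ => hε)
  have key : ∀ ε : ℝ, 0 < ε →
      pminor (L + ε • 1) (A ∪ B) * pminor (L + ε • 1) (A ∩ B) ≤
        pminor (L + ε • 1) A * pminor (L + ε • 1) B := fun ε hε =>
    PminorAux.pd_submod (hPD ε hε) A B
  have hcont : ∀ C : Finset (Fin n), Continuous fun ε : ℝ => pminor (L + ε • 1) C := by
    intro C
    apply Continuous.matrix_det
    apply continuous_matrix
    intro a b
    simp only [PminorAux.mat, Matrix.submatrix_apply, Matrix.add_apply, Matrix.smul_apply,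
      smul_eq_mul]
    fun_prop
  have h0 : ∀ C : Finset (Fin n), Filter.Tendsto (fun ε : ℝ => pminor (L + ε • 1) C)
      (nhdsWithin 0 (Set.Ioi 0)) (nhds (pminor L C)) := by
    intro C
    have h := ((hcont C).tendsto 0).mono_left
      (nhdsWithin_le_nhds (s := Set.Ioi (0 : ℝ)))
    simpa using h
  exact le_of_tendsto_of_tendsto ((h0 (A ∪ B)).mul (h0 (A ∩ B))) ((h0 A).mul (h0 B))
    (eventually_nhdsWithin_of_forall fun ε hε => key ε hε)
end
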